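/- Let 𝔞 be a finite-dimensional Lie algebra over an arbitrary field F. Then U(𝔞)^♮, the set of linear forms on U(𝔞) vanishing on some power of the augmentation ideal, is an essential extension of the one-dimensional trivial module F^* ⊆ U(𝔞)^♮ as a left U(𝔞)-module. -/

import Mathlib

universe u

variable (F : Type u) [Field F] (L : Type u) [LieRing L] [LieAlgebra F L]

section UEACounitSec

attribute [local instance] LieRing.ofAssociativeRing

/-- The counit (augmentation map) of the universal enveloping algebra. -/
noncomputable def UEACounit : UniversalEnvelopingAlgebra F L →ₐ[F] F :=
  UniversalEnvelopingAlgebra.lift F (0 : L →ₗ⁅F⁆ F)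

end UEACounitSec

/-- The linear dual `U(𝔞)^* = Hom_F(U(𝔞), F)`. -/
abbrev UEADual := UniversalEnvelopingAlgebra F L →ₗ[F] F

/-- The left `U(𝔞)`-module structure on `U(𝔞)^*` given by `(x • φ)(u) = φ(u * x)`. -/
noncomputable instance UEADual.instSMul : SMul (UniversalEnvelopingAlgebra F L) (UEADual F L) :=
  ⟨fun x φ => φ.comp (LinearMap.mulRight F x)⟩

lemma UEADual.smul_apply (x : UniversalEnvelopingAlgebra F L) (φ : UEADual F L)
    (u : UniversalEnvelopingAlgebra F L) : (x • φ) u = φ (u * x) := rfl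

noncomputable instance UEADual.instModule :
    Module (UniversalEnvelopingAlgebra F L) (UEADual F L) where
  smul := (· • ·)
  one_smul φ := LinearMap.ext fun u => by simp [UEADual.smul_apply]
  mul_smul x y φ := LinearMap.ext fun u => by simp [UEADual.smul_apply, mul_assoc]
  smul_zero x := LinearMap.ext fun u => by simp [UEADual.smul_apply]
  smul_add x φ ψ := LinearMap.ext fun u => by simp [UEADual.smul_apply]
  add_smul x y φ := LinearMap.ext fun u => by simp [UEADual.smul_apply, mul_add]
  zero_smul φ := LinearMap.ext fun u => by simp [UEADual.smul_apply]

noncomputable instance UEADual.instTower :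
    IsScalarTower F (UniversalEnvelopingAlgebra F L) (UEADual F L) :=
  ⟨fun c x φ => LinearMap.ext fun u => by
    simp [UEADual.smul_apply, mul_smul_comm]⟩

/-- The augmentation ideal, as an `F`-subspace of `U(𝔞)`. -/
noncomputable def augIdeal : Submodule F (UniversalEnvelopingAlgebra F L) :=
  LinearMap.ker (UEACounit F L).toLinearMap

/-- `U(𝔞)^♮`: linear forms vanishing on some power of the augmentation ideal. -/
def natSet : Set (UEADual F L) :=
  {φ | ∃ n : ℕ, ∀ u ∈ (augIdeal F L) ^ (n + 1), φ u = 0}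

lemma augIdeal_mul_top : augIdeal F L * ⊤ ≤ augIdeal F L := by
  rw [Submodule.mul_le]
  intro m hm n _
  simp only [augIdeal, LinearMap.mem_ker, AlgHom.toLinearMap_apply] at hm ⊢
  rw [map_mul, hm, zero_mul]

lemma augIdeal_pow_mul_top (n : ℕ) :
    (augIdeal F L) ^ (n + 1) * ⊤ ≤ (augIdeal F L) ^ (n + 1) := by
  induction n with
  | zero => simpa using augIdeal_mul_top F L
  | succ k ih =>
      calc (augIdeal F L) ^ (k + 2) * ⊤ = (augIdeal F L) ^ (k + 1) * (augIdeal F L * ⊤) := by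
            rw [pow_succ, mul_assoc]
        _ ≤ (augIdeal F L) ^ (k + 1) * augIdeal F L :=
            mul_le_mul' le_rfl (augIdeal_mul_top F L)
        _ = (augIdeal F L) ^ (k + 2) := (pow_succ _ _).symm

lemma augIdeal_pow_le_aux (a : ℕ) : ∀ c : ℕ,
    (augIdeal F L) ^ (a + c + 1) ≤ (augIdeal F L) ^ (a + 1) := by
  intro c
  induction c with
  | zero => simp
  | succ k ih =>
      calc (augIdeal F L) ^ (a + (k+1) + 1)
          = (augIdeal F L) ^ (a + k + 1) * augIdeal F L := by
            show (augIdeal F L) ^ ((a + k + 1) + 1) = _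
            rw [pow_succ]
        _ ≤ (augIdeal F L) ^ (a + k + 1) * ⊤ := mul_le_mul' le_rfl le_top
        _ ≤ (augIdeal F L) ^ (a + k + 1) := augIdeal_pow_mul_top F L _
        _ ≤ (augIdeal F L) ^ (a + 1) := ih

lemma augIdeal_pow_le (a b : ℕ) (h : a ≤ b) :
    (augIdeal F L) ^ (b + 1) ≤ (augIdeal F L) ^ (a + 1) := by
  obtain ⟨c, rfl⟩ := Nat.exists_eq_add_of_le h
  exact augIdeal_pow_le_aux F L a c

/-- `U(𝔞)^♮` as a `U(𝔞)`-submodule of the linear dual. -/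
noncomputable def natSub : Submodule (UniversalEnvelopingAlgebra F L) (UEADual F L) where
  carrier := natSet F L
  zero_mem' := ⟨0, fun u _ => rfl⟩
  add_mem' := by
    rintro φ ψ ⟨m, hm⟩ ⟨n, hn⟩
    refine ⟨max m n, fun u hu => ?_⟩
    have h1 : u ∈ (augIdeal F L) ^ (m + 1) := augIdeal_pow_le F L m _ (le_max_left m n) hu
    have h2 : u ∈ (augIdeal F L) ^ (n + 1) := augIdeal_pow_le F L n _ (le_max_right m n) hu
    simp [hm u h1, hn u h2]
  smul_mem' := by
    rintro x φ ⟨n, hn⟩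
    refine ⟨n, fun u hu => ?_⟩
    rw [UEADual.smul_apply]
    exact hn _ (augIdeal_pow_mul_top F L n (Submodule.mul_mem_mul hu Submodule.mem_top))

/-- The copy of the trivial one-dimensional module `F^*` inside the dual: forms vanishing
on the augmentation ideal. -/
noncomputable def trivSub : Submodule (UniversalEnvelopingAlgebra F L) (UEADual F L) where
  carrier := {φ | ∀ u ∈ augIdeal F L, φ u = 0}
  zero_mem' := fun u _ => rfl
  add_mem' := by
    intro φ ψ hφ hψ u hu
    simp [hφ u hu, hψ u hu]
  smul_mem' := by
    intro x φ hφ u hu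
    rw [UEADual.smul_apply]
    exact hφ _ (augIdeal_mul_top F L (Submodule.mul_mem_mul hu Submodule.mem_top))


/-- `U(𝔞)^♮` is an essential extension of the one-dimensional trivial
module `F^*` (the forms vanishing on the augmentation ideal), as a left `U(𝔞)`-module:
every nonzero `U(𝔞)`-submodule of `U(𝔞)^♮` meets `F^*` nontrivially. -/
theorem natural_essential_extension_of_trivial [FiniteDimensional F L] :
    trivSub F L ≤ natSub F L ∧
    ∀ P : Submodule (UniversalEnvelopingAlgebra F L) (UEADual F L),
      P ≤ natSub F L → P ≠ ⊥ → trivSub F L ⊓ P ≠ ⊥ := by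
  constructor
  · intro φ hφ
    exact ⟨0, fun u hu => hφ u (by simpa using hu)⟩
  · intro P hP hPne
    obtain ⟨φ, hφP, hφ0⟩ := Submodule.exists_mem_ne_zero_of_ne_bot hPne
    have hnat : ∃ n : ℕ, ∀ u ∈ (augIdeal F L) ^ (n + 1), φ u = 0 := hP hφP
    classical
    let n := Nat.find hnat
    have hvan : ∀ u ∈ (augIdeal F L) ^ (n + 1), φ u = 0 := Nat.find_spec hnat
    rw [Submodule.ne_bot_iff]
    rcases Nat.eq_zero_or_pos n with hn | hn
    · refine ⟨φ, ⟨?_, hφP⟩, hφ0⟩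
      intro u hu
      exact hvan u (by rw [hn]; simpa using hu)
    · -- n ≥ 1 : φ does not vanish on I^n
      obtain ⟨m, hm⟩ := Nat.exists_eq_add_of_lt hn
      rw [Nat.zero_add] at hm
      rw [hm] at hvan
      have hmin := Nat.find_min hnat (show m < n by omega)
      push_neg at hmin
      obtain ⟨u, hu, hφu⟩ := hmin
      refine ⟨u • φ, ⟨?_, P.smul_mem u hφP⟩, ?_⟩
      · intro v hv
        rw [UEADual.smul_apply]
        apply hvan
        have : v * u ∈ augIdeal F L * (augIdeal F L) ^ (m + 1) :=
          Submodule.mul_mem_mul hv hu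
        rwa [← pow_succ'] at this
      · intro h
        apply hφu
        have := congrArg (fun ψ : UEADual F L => ψ 1) h
        simpa [UEADual.smul_apply] using this
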